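/- For 0 < q < 1 let s_n = q^{−(n+1)²/2} be the Stieltjes–Wigert moments, with H_n = (s_{j+k})_{0≤j,k≤n} and D_n = det H_n. Then D_n = q^{−S_{n+1} − S_n + (n+1)/2} ∏_{j=1}^n (q;q)_j, where S_n = n(n+1)(2n+1)/6. -/

import Mathlib

open Finset

private lemma sw_rpow_sum {q : ℝ} (hq : 0 < q) {α : Type*} (s : Finset α) (f : α → ℝ) :
    ∏ i ∈ s, q ^ f i = q ^ (∑ i ∈ s, f i) := by
  classical
  induction s using Finset.induction with
  | empty => simp
  | @insert a s h ih =>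
      rw [Finset.prod_insert h, Finset.sum_insert h, Real.rpow_add hq, ih]

private lemma sw_Ioc_insert (i N : ℕ) (h : i ≤ N) :
    Finset.Ioc i (N + 1) = insert (N + 1) (Finset.Ioc i N) := by
  ext x
  simp only [Finset.mem_Ioc, Finset.mem_insert]
  omega

private lemma sw_prodA (q : ℝ) (N : ℕ) :
    ∏ i ∈ Finset.range (N + 1), ∏ j ∈ Finset.Ioc i N, (1 - q ^ (j - i)) =
      ∏ j ∈ Finset.range (N + 1), ∏ k ∈ Finset.range j, (1 - q ^ (k + 1)) := by
  induction N with
  | zero => simp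
  | succ N ih =>
      rw [Finset.prod_range_succ, Finset.prod_range_succ (f := fun j => ∏ k ∈ Finset.range j, (1 - q ^ (k + 1)))]
      rw [Finset.Ioc_self, Finset.prod_empty, mul_one]
      have h1 : ∀ i ∈ Finset.range (N + 1),
          ∏ j ∈ Finset.Ioc i (N + 1), (1 - q ^ (j - i)) =
          (1 - q ^ (N + 1 - i)) * ∏ j ∈ Finset.Ioc i N, (1 - q ^ (j - i)) := by
        intro i hi
        rw [Finset.mem_range] at hi
        rw [sw_Ioc_insert i N (by omega), Finset.prod_insert (by simp)]
      rw [Finset.prod_congr rfl h1, Finset.prod_mul_distrib, ih]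
      have h2 : ∏ i ∈ Finset.range (N + 1), (1 - q ^ (N + 1 - i)) =
          ∏ k ∈ Finset.range (N + 1), (1 - q ^ (k + 1)) := by
        rw [← Finset.prod_range_reflect (fun k => 1 - q ^ (k + 1)) (N + 1)]
        refine Finset.prod_congr rfl fun i hi => ?_
        rw [Finset.mem_range] at hi
        congr 2
        omega
      rw [h2]
      ring

private lemma sw_sumB (N : ℕ) :
    ∑ i ∈ Finset.range (N + 1), ∑ j ∈ Finset.Ioc i N, (j : ℝ) =
      ∑ j ∈ Finset.range (N + 1), ((j : ℝ)) ^ 2 := by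
  induction N with
  | zero => simp
  | succ N ih =>
      rw [Finset.sum_range_succ, Finset.sum_range_succ (f := fun j => ((j : ℝ)) ^ 2)]
      rw [Finset.Ioc_self, Finset.sum_empty, add_zero]
      have h1 : ∀ i ∈ Finset.range (N + 1),
          ∑ j ∈ Finset.Ioc i (N + 1), (j : ℝ) =
          ((N : ℝ) + 1) + ∑ j ∈ Finset.Ioc i N, (j : ℝ) := by
        intro i hi
        rw [Finset.mem_range] at hi
        rw [sw_Ioc_insert i N (by omega), Finset.sum_insert (by simp)]
        push_cast
        ring
      rw [Finset.sum_congr rfl h1, Finset.sum_add_distrib, ih, Finset.sum_const,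
        Finset.card_range]
      push_cast
      ring

private lemma sw_fin_prod (N : ℕ) (f : ℕ → ℕ → ℝ) :
    ∏ i : Fin (N + 1), ∏ j ∈ Finset.Ioi i, f (i : ℕ) (j : ℕ) =
      ∏ i ∈ Finset.range (N + 1), ∏ j ∈ Finset.Ioc i N, f i j := by
  rw [← Fin.prod_univ_eq_prod_range]
  refine Finset.prod_congr rfl fun i _ => ?_
  have : Finset.Ioc (i : ℕ) N = (Finset.Ioi i).map Fin.valEmbedding := by
    rw [Fin.map_valEmbedding_Ioi]
    congr 1
    ext x; simp only [Finset.mem_Ioc, Finset.mem_Ioo]; omega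
  rw [this, Finset.prod_map]
  rfl

private lemma sw_fin_sum (N : ℕ) (f : ℕ → ℝ) :
    ∑ i : Fin (N + 1), ∑ j ∈ Finset.Ioi i, f (j : ℕ) =
      ∑ i ∈ Finset.range (N + 1), ∑ j ∈ Finset.Ioc i N, f j := by
  rw [← Fin.sum_univ_eq_sum_range]
  refine Finset.sum_congr rfl fun i _ => ?_
  have : Finset.Ioc (i : ℕ) N = (Finset.Ioi i).map Fin.valEmbedding := by
    rw [Fin.map_valEmbedding_Ioi]
    congr 1
    ext x; simp only [Finset.mem_Ioc, Finset.mem_Ioo]; omega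
  rw [this, Finset.sum_map]
  rfl

private lemma sw_L1 (m : ℕ) :
    ∑ i ∈ Finset.range m, (-(((i : ℝ) + 1) ^ 2 / 2)) =
      -((m : ℝ) * ((m : ℝ) + 1) * (2 * (m : ℝ) + 1)) / 12 := by
  induction m with
  | zero => simp
  | succ m ih => rw [Finset.sum_range_succ, ih]; push_cast; ring

private lemma sw_L2 (m : ℕ) :
    ∑ i ∈ Finset.range m, (-((i : ℝ) * ((i : ℝ) + 2) / 2)) =
      -((m : ℝ) * ((m : ℝ) - 1) * (2 * (m : ℝ) - 1) / 6 + (m : ℝ) * ((m : ℝ) - 1)) / 2 := by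
  induction m with
  | zero => simp
  | succ m ih => rw [Finset.sum_range_succ, ih]; push_cast; ring

private lemma sw_L3 (m : ℕ) :
    ∑ i ∈ Finset.range m, ((i : ℝ)) ^ 2 =
      (m : ℝ) * ((m : ℝ) - 1) * (2 * (m : ℝ) - 1) / 6 := by
  induction m with
  | zero => simp
  | succ m ih => rw [Finset.sum_range_succ, ih]; push_cast; ring

/-- Determinant of the Stieltjes–Wigert Hankel matrix:
`D_n = q^{-S_{n+1} - S_n + (n+1)/2} ∏_{j=1}^n (q;q)_j` with `S_m = m(m+1)(2m+1)/6`. -/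
theorem stieltjes_wigert_hankel_det
    (q : ℝ) (hq : 0 < q) (hq1 : q < 1) (n : ℕ)
    (s : ℕ → ℝ) (hs : ∀ m : ℕ, s m = q ^ (-(((m : ℝ) + 1) ^ 2 / 2)))
    (H : Matrix (Fin (n + 1)) (Fin (n + 1)) ℝ)
    (hH : ∀ i j, H i j = s ((i : ℕ) + (j : ℕ)))
    (S : ℕ → ℝ) (hS : ∀ m : ℕ, S m = (m : ℝ) * ((m : ℝ) + 1) * (2 * (m : ℝ) + 1) / 6) :
    H.det = q ^ (-(S (n + 1)) - S n + ((n : ℝ) + 1) / 2) *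
      ∏ j ∈ Finset.Icc 1 n, ∏ k ∈ Finset.range j, (1 - q ^ (k + 1)) := by
  set d1 : Fin (n + 1) → ℝ := fun i => q ^ (-((((i : ℕ) : ℝ) + 1) ^ 2 / 2)) with hd1
  set d2 : Fin (n + 1) → ℝ := fun j => q ^ (-(((j : ℕ) : ℝ) * (((j : ℕ) : ℝ) + 2) / 2)) with hd2
  set v : Fin (n + 1) → ℝ := fun i => q ^ (-((i : ℕ) : ℝ)) with hv
  -- Factor H
  have hfact : H = Matrix.of fun i j =>
      d1 i * (Matrix.of fun i j => d2 j * Matrix.vandermonde v i j) i j := by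
    ext i j
    rw [hH, hs]
    simp only [Matrix.of_apply, Matrix.vandermonde_apply, hd1, hd2, hv]
    have hvp : (q ^ (-((i : ℕ) : ℝ))) ^ ((j : Fin (n+1)) : ℕ) =
        q ^ ((-((i : ℕ) : ℝ)) * (((j : ℕ) : ℝ))) := by
      rw [← Real.rpow_natCast (q ^ (-((i : ℕ) : ℝ))) (j : ℕ), ← Real.rpow_mul hq.le]
    rw [hvp, ← Real.rpow_add hq, ← Real.rpow_add hq]
    congr 1
    push_cast
    ring
  rw [hfact, Matrix.det_mul_column, Matrix.det_mul_row, Matrix.det_vandermonde]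
  -- rewrite Vandermonde factors
  have hVfac : ∀ i : Fin (n + 1), ∀ j ∈ Finset.Ioi i,
      v j - v i = q ^ (-((j : ℕ) : ℝ)) * (1 - q ^ ((j : ℕ) - (i : ℕ))) := by
    intro i j hj
    rw [Finset.mem_Ioi] at hj
    have hij : (i : ℕ) < (j : ℕ) := hj
    have hcast : (((j : ℕ) - (i : ℕ) : ℕ) : ℝ) = ((j : ℕ) : ℝ) - ((i : ℕ) : ℝ) := by
      push_cast [Nat.cast_sub hij.le]
      ring
    have hq2 : q ^ (((j : ℕ) - (i : ℕ) : ℕ)) = q ^ ((((j : ℕ) - (i : ℕ) : ℕ)) : ℝ) := by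
      rw [Real.rpow_natCast]
    rw [mul_sub, mul_one, hq2, hcast, ← Real.rpow_add hq, hv]
    simp only
    congr 2
    ring
  have hVprod : ∏ i : Fin (n + 1), ∏ j ∈ Finset.Ioi i, (v j - v i) =
      (∏ i : Fin (n + 1), ∏ j ∈ Finset.Ioi i, q ^ (-((j : ℕ) : ℝ))) *
      (∏ i : Fin (n + 1), ∏ j ∈ Finset.Ioi i, (1 - q ^ ((j : ℕ) - (i : ℕ)))) := by
    rw [← Finset.prod_mul_distrib]
    refine Finset.prod_congr rfl fun i _ => ?_
    rw [← Finset.prod_mul_distrib]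
    exact Finset.prod_congr rfl (hVfac i)
  rw [hVprod]
  -- the q-power part of the Vandermonde
  have hE3 : ∏ i : Fin (n + 1), ∏ j ∈ Finset.Ioi i, q ^ (-((j : ℕ) : ℝ)) =
      q ^ (-(∑ j ∈ Finset.range (n + 1), ((j : ℝ)) ^ 2)) := by
    have : ∀ i : Fin (n + 1), ∏ j ∈ Finset.Ioi i, q ^ (-((j : ℕ) : ℝ)) =
        q ^ (∑ j ∈ Finset.Ioi i, (-((j : ℕ) : ℝ))) := fun i => sw_rpow_sum hq _ _
    rw [Finset.prod_congr rfl fun i _ => this i, sw_rpow_sum hq]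
    congr 1
    have := sw_fin_sum n (fun j => -(j : ℝ))
    rw [this]
    simp only [Finset.sum_neg_distrib]
    rw [sw_sumB n]
  -- the q-Pochhammer part
  have hP : ∏ i : Fin (n + 1), ∏ j ∈ Finset.Ioi i, (1 - q ^ ((j : ℕ) - (i : ℕ))) =
      ∏ j ∈ Finset.Icc 1 n, ∏ k ∈ Finset.range j, (1 - q ^ (k + 1)) := by
    rw [sw_fin_prod n (fun i j => 1 - q ^ (j - i)), sw_prodA q n]
    have hr : Finset.range (n + 1) = insert 0 (Finset.Icc 1 n) := by
      ext x
      simp only [Finset.mem_range, Finset.mem_insert, Finset.mem_Icc]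
      omega
    rw [hr, Finset.prod_insert (by simp)]
    simp
  rw [hE3, hP]
  -- products of the diagonal factors
  have hd1p : ∏ i, d1 i = q ^ (∑ i ∈ Finset.range (n + 1), (-(((i : ℝ) + 1) ^ 2 / 2))) := by
    rw [hd1, sw_rpow_sum hq]
    congr 1
    rw [← Fin.sum_univ_eq_sum_range (fun i => -(((i : ℝ) + 1) ^ 2 / 2)) (n + 1)]
  have hd2p : ∏ i, d2 i = q ^ (∑ i ∈ Finset.range (n + 1), (-((i : ℝ) * ((i : ℝ) + 2) / 2))) := by
    rw [hd2, sw_rpow_sum hq]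
    congr 1
    rw [← Fin.sum_univ_eq_sum_range (fun i => -((i : ℝ) * ((i : ℝ) + 2) / 2)) (n + 1)]
  rw [hd1p, hd2p]
  have hcomb : ∀ a b c : ℝ,
      q ^ a * (q ^ b * (q ^ c *
        ∏ j ∈ Finset.Icc 1 n, ∏ k ∈ Finset.range j, (1 - q ^ (k + 1)))) =
      q ^ (a + b + c) *
        ∏ j ∈ Finset.Icc 1 n, ∏ k ∈ Finset.range j, (1 - q ^ (k + 1)) := by
    intro a b c
    rw [Real.rpow_add hq, Real.rpow_add hq]
    ring
  rw [hcomb]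
  congr 2
  rw [sw_L1 (n + 1), sw_L2 (n + 1), sw_L3 (n + 1), hS, hS]
  push_cast
  ring
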